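/- Let F be a field and let L be a nilpotent left Leibniz algebra over F with dim_F L = 3 which is not a Lie algebra. Assume dim_F Leib(L) = 2. Then L cannot have nilpotency class 2; that is, γ_3(L) = [L,[L,L]] ≠ 0, so the nilpotency class of L is exactly 3. -/

import Mathlib

open Module Polynomial

variable {F L : Type*} [Field F] [AddCommGroup L] [Module F L]

/-- The left Leibniz identity for a bilinear bracket. -/
def IsLeibniz (β : L →ₗ[F] L →ₗ[F] L) : Prop :=
  ∀ a b c : L, β (β a b) c = β a (β b c) - β b (β a c)

/-- The Leibniz kernel `Leib(L)`: the subspace spanned by all squares `[a,a]`. -/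
def leibKer (β : L →ₗ[F] L →ₗ[F] L) : Submodule F L :=
  Submodule.span F (Set.range fun a => β a a)

/-- The center `ζ(L)` of a Leibniz algebra. -/
def lzCenter (β : L →ₗ[F] L →ₗ[F] L) : Submodule F L where
  carrier := {x | ∀ y, β x y = 0 ∧ β y x = 0}
  add_mem' := by
    intro a b ha hb y
    refine ⟨?_, ?_⟩
    · rw [map_add, LinearMap.add_apply, (ha y).1, (hb y).1, add_zero]
    · rw [map_add, (ha y).2, (hb y).2, add_zero]
  zero_mem' := by
    intro y
    refine ⟨?_, ?_⟩ <;> simp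
  smul_mem' := by
    intro c a ha y
    refine ⟨?_, ?_⟩
    · rw [map_smul, LinearMap.smul_apply, (ha y).1, smul_zero]
    · rw [map_smul, (ha y).2, smul_zero]

/-- The derived subalgebra `[L,L]`. -/
def leibDerived (β : L →ₗ[F] L →ₗ[F] L) : Submodule F L :=
  Submodule.span F {x | ∃ a b : L, β a b = x}

/-- The lower central series: `leibGamma β 1 = ⊤`, `leibGamma β (k+1) = [L, leibGamma β k]`. -/
def leibGamma (β : L →ₗ[F] L →ₗ[F] L) : ℕ → Submodule F L
  | 0 => ⊤
  | 1 => ⊤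
  | (n+2) => Submodule.span F {x | ∃ a b : L, b ∈ leibGamma β (n+1) ∧ β a b = x}

/-- The derived series: `leibDelta β 0 = ⊤`, `leibDelta β (n+1) = [leibDelta β n, leibDelta β n]`. -/
def leibDelta (β : L →ₗ[F] L →ₗ[F] L) : ℕ → Submodule F L
  | 0 => ⊤
  | (n+1) => Submodule.span F
      {x | ∃ a ∈ leibDelta β n, ∃ b ∈ leibDelta β n, β a b = x}

/-- Multiplication table predicate: the brackets of the triple `a` are given by `t`. -/
def MulTbl (β : L →ₗ[F] L →ₗ[F] L) (a : Fin 3 → L) (t : Fin 3 → Fin 3 → L) : Prop :=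
  ∀ i j, β (a i) (a j) = t i j

section Aux
variable (β : L →ₗ[F] L →ₗ[F] L)

lemma my_gamma_succ_succ (n : ℕ) :
    leibGamma β (n+2) = Submodule.span F {x | ∃ a b : L, b ∈ leibGamma β (n+1) ∧ β a b = x} :=
  rfl

lemma my_mem_gamma {n : ℕ} {a b : L} (hb : b ∈ leibGamma β (n+1)) :
    β a b ∈ leibGamma β (n+2) :=
  Submodule.subset_span ⟨a, b, hb, rfl⟩

lemma my_gamma_succ_le : ∀ n, leibGamma β (n+1) ≤ leibGamma β n
  | 0 => le_rfl
  | 1 => le_top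
  | (n+2) => by
      rw [my_gamma_succ_succ, my_gamma_succ_succ]
      apply Submodule.span_mono
      rintro x ⟨a, b, hb, rfl⟩
      exact ⟨a, b, my_gamma_succ_le (n+1) hb, rfl⟩

lemma my_gamma_antitone {m n : ℕ} (h : m ≤ n) : leibGamma β n ≤ leibGamma β m := by
  induction n with
  | zero => simp_all
  | succ n ih =>
    rcases eq_or_lt_of_le h with rfl | h'
    · exact le_rfl
    · exact (my_gamma_succ_le β n).trans (ih (Nat.lt_succ_iff.mp h'))

lemma my_gamma_stab {n : ℕ} (h : leibGamma β (n+2) = leibGamma β (n+1)) :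
    ∀ m, leibGamma β (n+1+m) = leibGamma β (n+1) := by
  intro m
  induction m with
  | zero => rfl
  | succ m ih =>
    have : n+1+(m+1) = (n+m)+2 := by ring
    rw [this, my_gamma_succ_succ]
    have h2 : (n+m)+1 = n+1+m := by ring
    rw [h2, ih, ← my_gamma_succ_succ, h]

lemma my_gamma_bot {n : ℕ} (hnil : ∃ k : ℕ, leibGamma β k = ⊥)
    (h : leibGamma β (n+2) = leibGamma β (n+1)) : leibGamma β (n+1) = ⊥ := by
  obtain ⟨k, hk⟩ := hnil
  have := my_gamma_stab β h k
  have hle : leibGamma β (n+1+k) ≤ leibGamma β k := my_gamma_antitone β (Nat.le_add_left k (n+1))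
  rw [this, hk] at hle
  exact le_bot_iff.mp hle

lemma my_leibKer_killL (hLeib : IsLeibniz β) {x : L} (hx : x ∈ leibKer β) : β x = 0 := by
  induction hx using Submodule.span_induction with
  | mem x hx =>
    obtain ⟨a, rfl⟩ := hx
    ext y
    simp [hLeib a a y]
  | zero => simp
  | add x y _ _ hx hy => simp [hx, hy]
  | smul c x _ hx => simp [hx]

lemma my_leibKer_le_gamma2 : leibKer β ≤ leibGamma β 2 := by
  rw [leibKer, Submodule.span_le]
  rintro x ⟨a, rfl⟩
  exact my_mem_gamma β (by trivial)

end Aux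

theorem stmt16 (β : L →ₗ[F] L →ₗ[F] L) (hLeib : IsLeibniz β)
    (hdim : finrank F L = 3) (hnotLie : ∃ a : L, β a a ≠ 0)
    (hnil : ∃ k : ℕ, leibGamma β k = ⊥)
    (hk : finrank F (leibKer β) = 2) :
    leibGamma β 3 ≠ ⊥ ∧ leibGamma β 4 = ⊥ := by
  have hFD : FiniteDimensional F L := FiniteDimensional.of_finrank_pos (by omega)
  -- γ2 ≠ ⊤
  have hne_top : leibGamma β 2 ≠ ⊤ := by
    intro htop
    have h32 : leibGamma β 2 = leibGamma β 1 := by rw [htop]; rfl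
    have := my_gamma_bot β (n := 0) hnil h32
    have : (⊤ : Submodule F L) = ⊥ := by
      have h1 : leibGamma β 1 = ⊤ := rfl
      rw [← h1]; exact this
    have : finrank F L = 0 := by
      rw [← finrank_top F L, this, finrank_bot]
    omega
  have h2lt : finrank F (leibGamma β 2) < 3 := hdim ▸ Submodule.finrank_lt hne_top
  have h2ge : finrank F (leibKer β) ≤ finrank F (leibGamma β 2) :=
    Submodule.finrank_mono (my_leibKer_le_gamma2 β)
  have h2eq : finrank F (leibGamma β 2) = 2 := by omega
  have hker_eq : leibKer β = leibGamma β 2 :=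
    Submodule.eq_of_le_of_finrank_le (my_leibKer_le_gamma2 β) (by omega)
  -- γ3 ≠ ⊥
  have h3ne : leibGamma β 3 ≠ ⊥ := by
    intro h3
    have hrk : ∀ (a b : L), b ∈ leibGamma β 2 → β a b = 0 := by
      intro a b hb
      have : β a b ∈ leibGamma β 3 := my_mem_gamma β hb
      rw [h3] at this
      simpa using this
    -- quotient
    set N := leibGamma β 2 with hN
    have hq : finrank F (L ⧸ N) = 1 := by
      have := Submodule.finrank_quotient_add_finrank N
      omega
    obtain ⟨e, he⟩ : ∃ e : L, e ∉ N := by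
      by_contra h
      push_neg at h
      exact hne_top (Submodule.eq_top_iff'.mpr h)
    have hme : (Submodule.Quotient.mk e : L ⧸ N) ≠ 0 := by
      simpa [Submodule.Quotient.mk_eq_zero] using he
    have hspan : Submodule.span F {(Submodule.Quotient.mk e : L ⧸ N)} = ⊤ := by
      apply Submodule.eq_top_of_finrank_eq
      rw [hq, finrank_span_singleton hme]
    have hdecomp : ∀ a : L, ∃ s : F, a - s • e ∈ N := by
      intro a
      have : (Submodule.Quotient.mk a : L ⧸ N) ∈ Submodule.span F {(Submodule.Quotient.mk e : L ⧸ N)} := by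
        rw [hspan]; trivial
      obtain ⟨s, hs⟩ := Submodule.mem_span_singleton.mp this
      refine ⟨s, ?_⟩
      rw [← Submodule.Quotient.mk_eq_zero N]
      rw [Submodule.Quotient.mk_sub, Submodule.Quotient.mk_smul, hs, sub_self]
    have key : ∀ a b : L, β a b ∈ Submodule.span F {β e e} := by
      intro a b
      obtain ⟨s, hu⟩ := hdecomp a
      obtain ⟨t, hv⟩ := hdecomp b
      obtain ⟨u, hu, hau⟩ : ∃ u ∈ N, a = s • e + u := ⟨a - s • e, hu, by abel⟩
      obtain ⟨v, hv, hbv⟩ : ∃ v ∈ N, b = t • e + v := ⟨b - t • e, hv, by abel⟩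
      have hβu : β u = 0 := my_leibKer_killL β hLeib (hker_eq ▸ hu)
      have hβev : β e v = 0 := hrk e _ hv
      have heq : β a b = (s * t) • β e e := by
        rw [hau, hbv]
        simp [hβu, hβev, smul_smul]
      rw [heq]
      exact Submodule.smul_mem _ _ (Submodule.mem_span_singleton_self _)
    have hle : N ≤ Submodule.span F {β e e} := by
      rw [hN, my_gamma_succ_succ, Submodule.span_le]
      rintro x ⟨a, b, _, rfl⟩
      exact key a b
    have hmono : finrank F N ≤ finrank F (Submodule.span F {β e e}) :=
      Submodule.finrank_mono hle
    have hs1 : finrank F (Submodule.span F ({β e e} : Set L)) ≤ 1 := by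
      rcases eq_or_ne (β e e) 0 with h0 | h0
      · rw [h0, Submodule.span_zero_singleton]
        simp
      · rw [finrank_span_singleton h0]
    omega
  refine ⟨h3ne, ?_⟩
  -- γ3 < γ2
  have h32ne : leibGamma β 3 ≠ leibGamma β 2 := by
    intro h
    have := my_gamma_bot β (n := 1) hnil h
    exact h3ne (le_bot_iff.mp (this ▸ (h.le : leibGamma β 3 ≤ leibGamma β 2)))
  have h3lt : finrank F (leibGamma β 3) < 2 :=
    h2eq ▸ Submodule.finrank_lt_finrank_of_lt (lt_of_le_of_ne (my_gamma_succ_le β 2) h32ne)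
  have h3pos : 0 < finrank F (leibGamma β 3) := by
    rcases Nat.eq_zero_or_pos (finrank F (leibGamma β 3)) with h0 | h
    · exact absurd (Submodule.finrank_eq_zero.mp h0) h3ne
    · exact h
  have h43ne : leibGamma β 4 ≠ leibGamma β 3 := by
    intro h
    exact h3ne (my_gamma_bot β (n := 2) hnil h)
  have h4lt : finrank F (leibGamma β 4) < finrank F (leibGamma β 3) :=
    Submodule.finrank_lt_finrank_of_lt (lt_of_le_of_ne (my_gamma_succ_le β 3) h43ne)
  exact Submodule.finrank_eq_zero.mp (by omega)
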